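/- If X is a finite connected n-dimensional CW complex with H^n(X; ℤ) ≠ 0, then there exists a map from X to ℝPⁿ whose entire homotopy class consists of surjective maps (a strong surjection). -/

import Mathlib

/-- The `n`-sphere, as the unit sphere in Euclidean `(n+1)`-space. -/
noncomputable abbrev Sph (n : ℕ) : Type :=
  Metric.sphere (0 : EuclideanSpace ℝ (Fin (n + 1))) 1

/-- The antipodal identification on the `n`-sphere. -/
noncomputable def antipodalSetoid (n : ℕ) : Setoid (Sph n) :=
  ⟨fun a b => a = b ∨ a = -b, by
    refine ⟨fun a => Or.inl rfl, ?_, ?_⟩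
    · rintro a b (rfl | rfl)
      · exact Or.inl rfl
      · exact Or.inr (neg_neg b).symm
    · rintro a b c (rfl | rfl) (h | h)
      · exact Or.inl h
      · exact Or.inr h
      · exact Or.inr (by rw [h])
      · exact Or.inl (by rw [h, neg_neg])⟩

/-- Real projective `n`-space, as the antipodal quotient of the `n`-sphere. -/
noncomputable def RPn (n : ℕ) : Type := Quotient (antipodalSetoid n)

noncomputable instance (n : ℕ) : TopologicalSpace (RPn n) := instTopologicalSpaceQuotient

namespace StrongSurj

variable {n : ℕ}

/-- The antipodal double covering. -/
noncomputable def pr (n : ℕ) : Sph n → RPn n := Quotient.mk (antipodalSetoid n)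

lemma pr_continuous : Continuous (pr n) := continuous_quot_mk

lemma pr_surjective : Function.Surjective (pr n) := fun q =>
  Quotient.inductionOn q fun a => ⟨a, rfl⟩

lemma pr_eq_iff {a b : Sph n} : pr n a = pr n b ↔ a = b ∨ a = -b :=
  ⟨Quotient.exact, fun h => Quotient.sound h⟩

lemma pr_neg (a : Sph n) : pr n (-a) = pr n a :=
  pr_eq_iff.mpr (Or.inr rfl)

lemma dist_neg_neg' (a b : Sph n) : dist (-a) (-b) = dist a b := by
  rw [Subtype.dist_eq, Subtype.dist_eq, coe_neg_sphere, coe_neg_sphere]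
  exact dist_neg_neg _ _

lemma dist_neg_left' (a b : Sph n) : dist (-a) b = dist a (-b) := by
  rw [← dist_neg_neg' a (-b), neg_neg]

lemma dist_self_neg (a : Sph n) : dist a (-a) = 2 := by
  have h := mem_sphere_zero_iff_norm.mp a.2
  rw [Subtype.dist_eq, coe_neg_sphere, dist_eq_norm, sub_neg_eq_add, ← two_smul ℝ,
    norm_smul, h]
  norm_num

lemma ne_neg_of_dist {a b s : Sph n} (ha : dist a s < 1) (hb : dist b s < 1) : a ≠ -b := by
  rintro rfl
  have h2 : dist (-b) b < 2 := by
    calc dist (-b) b ≤ dist (-b) s + dist s b := dist_triangle _ _ _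
    _ < 1 + 1 := add_lt_add ha (by rwa [dist_comm])
    _ = 2 := by norm_num
  rw [dist_comm, dist_self_neg] at h2
  exact absurd h2 (lt_irrefl 2)

lemma fiber_unique {a b s : Sph n} (h : pr n a = pr n b) (ha : dist a s < 1)
    (hb : dist b s < 1) : a = b := by
  rcases pr_eq_iff.mp h with h' | h'
  · exact h'
  · exact absurd h' (ne_neg_of_dist ha hb)

/-- The quotient "distance" on `RPn`. -/
noncomputable def D : RPn n → RPn n → ℝ :=
  Quotient.lift₂ (fun a b => min (dist a b) (dist a (-b)))
    (by
      rintro a b a' b' (rfl | rfl) (rfl | rfl)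
      · rfl
      · show min (dist a (-b')) (dist a (- -b')) = min (dist a b') (dist a (-b'))
        rw [neg_neg, min_comm]
      · show min (dist (-a') b) (dist (-a') (-b)) = min (dist a' b) (dist a' (-b))
        rw [dist_neg_neg', dist_neg_left', min_comm]
      · show min (dist (-a') (-b')) (dist (-a') (- -b')) = min (dist a' b') (dist a' (-b'))
        rw [neg_neg, dist_neg_neg', dist_neg_left'])

lemma D_mk (a b : Sph n) : D (pr n a) (pr n b) = min (dist a b) (dist a (-b)) := rfl

lemma D_le_dist (a b : Sph n) : D (pr n a) (pr n b) ≤ dist a b := min_le_left _ _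

lemma D_nonneg (q₁ q₂ : RPn n) : 0 ≤ D q₁ q₂ := by
  induction q₁ using Quotient.inductionOn with
  | h a =>
  induction q₂ using Quotient.inductionOn with
  | h b => exact le_min dist_nonneg dist_nonneg

lemma D_self (q : RPn n) : D q q = 0 := by
  induction q using Quotient.inductionOn with
  | h a =>
    show D (pr n a) (pr n a) = 0
    refine le_antisymm ?_ (D_nonneg _ _)
    rw [D_mk]
    exact le_trans (min_le_left _ _) (le_of_eq (dist_self _))

lemma D_symm (q₁ q₂ : RPn n) : D q₁ q₂ = D q₂ q₁ := by
  induction q₁ using Quotient.inductionOn with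
  | h a =>
  induction q₂ using Quotient.inductionOn with
  | h b =>
    show min (dist a b) (dist a (-b)) = min (dist b a) (dist b (-a))
    rw [dist_comm a b, dist_comm a (-b), dist_neg_left']

lemma D_triangle (q₁ q₂ q₃ : RPn n) : D q₁ q₃ ≤ D q₁ q₂ + D q₂ q₃ := by
  induction q₁ using Quotient.inductionOn with
  | h a =>
  induction q₂ using Quotient.inductionOn with
  | h b =>
  induction q₃ using Quotient.inductionOn with
  | h c =>
    show min (dist a c) (dist a (-c)) ≤
      min (dist a b) (dist a (-b)) + min (dist b c) (dist b (-c))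
    have e1 : dist (-b) c = dist b (-c) := dist_neg_left' b c
    have e2 : dist (-b) (-c) = dist b c := dist_neg_neg' b c
    rcases min_cases (dist a b) (dist a (-b)) with ⟨h1, _⟩ | ⟨h1, _⟩ <;>
      rcases min_cases (dist b c) (dist b (-c)) with ⟨h2, _⟩ | ⟨h2, _⟩ <;> rw [h1, h2]
    · exact le_trans (min_le_left _ _) (dist_triangle a b c)
    · exact le_trans (min_le_right _ _) (dist_triangle a b (-c))
    · calc min (dist a c) (dist a (-c)) ≤ dist a (-c) := min_le_right _ _
        _ ≤ dist a (-b) + dist (-b) (-c) := dist_triangle _ _ _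
        _ = dist a (-b) + dist b c := by rw [e2]
    · calc min (dist a c) (dist a (-c)) ≤ dist a c := min_le_left _ _
        _ ≤ dist a (-b) + dist (-b) c := dist_triangle _ _ _
        _ = dist a (-b) + dist b (-c) := by rw [e1]

lemma isOpen_iff_pr {s : Set (RPn n)} : IsOpen s ↔ IsOpen (pr n ⁻¹' s) :=
  isOpen_coinduced

lemma continuous_D_pr (q₀ : RPn n) : Continuous (fun a : Sph n => D (pr n a) q₀) := by
  induction q₀ using Quotient.inductionOn with
  | h b =>
    show Continuous fun a : Sph n => min (dist a b) (dist a (-b))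
    exact (continuous_id.dist continuous_const).min (continuous_id.dist continuous_const)

lemma isOpen_Dball (q₀ : RPn n) (ε : ℝ) : IsOpen {q : RPn n | D q q₀ < ε} := by
  rw [isOpen_iff_pr]
  exact isOpen_lt (continuous_D_pr q₀) continuous_const

lemma continuous_neg_sphere : Continuous (fun a : Sph n => -a) :=
  (continuous_subtype_val.neg).subtype_mk _

lemma pr_isOpenMap : IsOpenMap (pr n) := by
  intro U hU
  rw [isOpen_iff_pr]
  have key : pr n ⁻¹' (pr n '' U) = U ∪ (fun a : Sph n => -a) ⁻¹' U := by
    ext a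
    constructor
    · rintro ⟨b, hb, hba⟩
      rcases pr_eq_iff.mp hba with rfl | rfl
      · exact Or.inl hb
      · exact Or.inr hb
    · rintro (h | h)
      · exact ⟨a, h, rfl⟩
      · exact ⟨-a, h, pr_neg a⟩
  rw [key]
  exact hU.union (continuous_neg_sphere.isOpen_preimage U hU)

/-- Local section of the double cover, choosing the fiber point near `s`. -/
noncomputable def Sec (s : Sph n) (q : RPn n) : Sph n :=
  letI := Classical.propDecidable
  if h : ∃ a : Sph n, pr n a = q ∧ dist a s < 1 then h.choose else s

lemma Sec_eq {s a : Sph n} {q : RPn n} (hpa : pr n a = q) (ha : dist a s < 1) :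
    Sec s q = a := by
  have h : ∃ b : Sph n, pr n b = q ∧ dist b s < 1 := ⟨a, hpa, ha⟩
  rw [Sec]
  rw [dif_pos h]
  exact fiber_unique (h.choose_spec.1.trans hpa.symm) h.choose_spec.2 ha

lemma Sec_exists {s : Sph n} {q : RPn n} {ε : ℝ} (hε : ε ≤ 1) (h : D q (pr n s) < ε) :
    ∃ a : Sph n, pr n a = q ∧ dist a s < ε ∧ Sec s q = a := by
  induction q using Quotient.inductionOn with
  | h b =>
    have h' : min (dist b s) (dist b (-s)) < ε := by
      have : D (pr n b) (pr n s) < ε := h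
      rwa [D_mk] at this
    rcases min_lt_iff.mp h' with hc | hc
    · exact ⟨b, rfl, hc, Sec_eq rfl (lt_of_lt_of_le hc hε)⟩
    · have hc' : dist (-b) s < ε := by rw [dist_neg_left']; exact hc
      exact ⟨-b, pr_neg b, hc', Sec_eq (pr_neg b) (lt_of_lt_of_le hc' hε)⟩

lemma Sec_pr {s : Sph n} {q : RPn n} (h : D q (pr n s) < 1) : pr n (Sec s q) = q := by
  obtain ⟨a, ha, _, hS⟩ := Sec_exists le_rfl h
  rw [hS, ha]

lemma secCenter_continuousOn (s₀ : Sph n) :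
    ContinuousOn (Sec s₀) {q : RPn n | D q (pr n s₀) < 1} := by
  rw [continuousOn_iff']
  intro V hV
  refine ⟨pr n '' (V ∩ Metric.ball s₀ 1), pr_isOpenMap _ (hV.inter Metric.isOpen_ball), ?_⟩
  ext q
  simp only [Set.mem_inter_iff, Set.mem_preimage, Set.mem_setOf_eq, Set.mem_image,
    Metric.mem_ball]
  constructor
  · rintro ⟨hqV, hq⟩
    obtain ⟨a, ha, had, hS⟩ := Sec_exists le_rfl hq
    exact ⟨⟨a, ⟨hS ▸ hqV, had⟩, ha⟩, hq⟩
  · rintro ⟨⟨a, ⟨haV, had⟩, ha⟩, hq⟩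
    refine ⟨?_, hq⟩
    rw [← ha] at *
    rw [Sec_eq rfl had]
    exact haV

lemma continuous_sec_comp {Z : Type*} [TopologicalSpace Z] {φ : Z → Sph n} {ψ : Z → RPn n}
    (hφ : Continuous φ) (hψ : Continuous ψ)
    (h : ∀ z, D (ψ z) (pr n (φ z)) < 4⁻¹) :
    Continuous fun z => Sec (φ z) (ψ z) := by
  rw [continuous_iff_continuousAt]
  intro z₀
  set s₀ := φ z₀ with hs₀
  set W := φ ⁻¹' (Metric.ball s₀ 4⁻¹) with hW
  have hWopen : IsOpen W := Metric.isOpen_ball.preimage hφ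
  have hz₀W : z₀ ∈ W := by
    show φ z₀ ∈ Metric.ball s₀ 4⁻¹
    rw [Metric.mem_ball, ← hs₀, dist_self]
    norm_num
  have hWd : ∀ z ∈ W, dist (φ z) s₀ < 4⁻¹ := fun z hz => hz
  have hψU : ∀ z ∈ W, D (ψ z) (pr n s₀) < 2⁻¹ := by
    intro z hz
    calc D (ψ z) (pr n s₀) ≤ D (ψ z) (pr n (φ z)) + D (pr n (φ z)) (pr n s₀) :=
          D_triangle _ _ _
      _ ≤ D (ψ z) (pr n (φ z)) + dist (φ z) s₀ := add_le_add_right (D_le_dist _ _) _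
      _ < 4⁻¹ + 4⁻¹ := add_lt_add (h z) (hWd z hz)
      _ = 2⁻¹ := by norm_num
  have heq : ∀ z ∈ W, Sec s₀ (ψ z) = Sec (φ z) (ψ z) := by
    intro z hz
    obtain ⟨a, ha, had, hS⟩ := Sec_exists (by norm_num) (h z)
    rw [hS]
    refine Sec_eq ha ?_
    calc dist a s₀ ≤ dist a (φ z) + dist (φ z) s₀ := dist_triangle _ _ _
      _ < 4⁻¹ + 4⁻¹ := add_lt_add had (hWd z hz)
      _ < 1 := by norm_num
  have hcont : ContinuousOn (fun z => Sec s₀ (ψ z)) W := by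
    refine (secCenter_continuousOn s₀).comp hψ.continuousOn ?_
    intro z hz
    exact lt_trans (hψU z hz) (by norm_num)
  have hcont2 : ContinuousOn (fun z => Sec (φ z) (ψ z)) W := hcont.congr fun z hz => (heq z hz).symm
  exact hcont2.continuousAt (hWopen.mem_nhds hz₀W)

end StrongSurj



section Part2
open StrongSurj unitInterval

variable {n : ℕ} {X : Type} [TopologicalSpace X]

/-- A map to the sphere missing a point is homotopic to a constant map. -/
lemma homotopic_const_of_misses (f : C(X, Sph n)) (y : Sph n) (hmiss : ∀ x, f x ≠ y) :
    f.Homotopic (ContinuousMap.const X (-y)) := by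
  set v : unitInterval × X → EuclideanSpace ℝ (Fin (n + 1)) :=
    fun z => (1 - (z.1 : ℝ)) • ((f z.2 : EuclideanSpace ℝ (Fin (n+1)))) +
      (z.1 : ℝ) • (-(y : EuclideanSpace ℝ (Fin (n+1)))) with hv
  have hvne : ∀ z, v z ≠ 0 := by
    rintro ⟨t, x⟩ h0
    have hfx : ‖(f x : EuclideanSpace ℝ (Fin (n+1)))‖ = 1 := mem_sphere_zero_iff_norm.mp (f x).2
    have hy : ‖(y : EuclideanSpace ℝ (Fin (n+1)))‖ = 1 := mem_sphere_zero_iff_norm.mp y.2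
    have heq : (1 - (t : ℝ)) • ((f x : EuclideanSpace ℝ (Fin (n+1)))) =
        (t : ℝ) • (y : EuclideanSpace ℝ (Fin (n+1))) := by
      have := h0
      rw [hv] at this
      simp only [smul_neg] at this
      linear_combination (norm := module) this
    have hnorm : (1 - (t : ℝ)) = (t : ℝ) := by
      have h1 : ‖(1 - (t : ℝ)) • ((f x : EuclideanSpace ℝ (Fin (n+1))))‖ =
          ‖(t : ℝ) • (y : EuclideanSpace ℝ (Fin (n+1)))‖ := by rw [heq]
      rw [norm_smul, norm_smul, hfx, hy, mul_one, mul_one] at h1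
      rwa [Real.norm_eq_abs, Real.norm_eq_abs, abs_of_nonneg (by linarith [t.2.2]),
        abs_of_nonneg t.2.1] at h1
    have ht : (t : ℝ) = 1/2 := by linarith
    apply hmiss x
    apply Subtype.ext
    have ht0 : (t : ℝ) ≠ 0 := by rw [ht]; norm_num
    rw [hnorm] at heq
    exact smul_right_injective _ ht0 heq
  have hvcont : Continuous v := by
    apply Continuous.add
    · exact ((continuous_const.sub (continuous_subtype_val.comp continuous_fst)).smul
        (continuous_subtype_val.comp (f.continuous.comp continuous_snd)))
    · exact ((continuous_subtype_val.comp continuous_fst).smul continuous_const)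
  refine ⟨{ toFun := fun z => ⟨‖v z‖⁻¹ • v z, mem_sphere_zero_iff_norm.mpr
              (norm_smul_inv_norm (hvne z))⟩
            continuous_toFun := ?_
            map_zero_left := ?_
            map_one_left := ?_ }⟩
  · exact (((hvcont.norm).inv₀ (fun z => norm_ne_zero_iff.mpr (hvne z))).smul hvcont).subtype_mk _
  · intro x
    apply Subtype.ext
    have hfx : ‖(f x : EuclideanSpace ℝ (Fin (n+1)))‖ = 1 := mem_sphere_zero_iff_norm.mp (f x).2
    show ‖v (0, x)‖⁻¹ • v (0, x) = _
    have h0 : v (0, x) = (f x : EuclideanSpace ℝ (Fin (n+1))) := by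
      rw [hv]; simp
    rw [h0, hfx]
    simp
  · intro x
    apply Subtype.ext
    have hy : ‖(y : EuclideanSpace ℝ (Fin (n+1)))‖ = 1 := mem_sphere_zero_iff_norm.mp y.2
    show ‖v (1, x)‖⁻¹ • v (1, x) = _
    have h1 : v (1, x) = -(y : EuclideanSpace ℝ (Fin (n+1))) := by
      rw [hv]; simp
    rw [h1, norm_neg, hy]
    simp [coe_neg_sphere]

/-- Uniform continuity in the time variable for a homotopy into `RPn`. -/
lemma uniform_time [CompactSpace X] [Nonempty X] (K : C(unitInterval × X, RPn n)) :
    ∃ δ : ℝ, 0 < δ ∧ ∀ (x : X) (t t' : unitInterval), dist t t' < δ →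
      D (K (t, x)) (K (t', x)) < 4⁻¹ := by
  have hpt : ∀ z : unitInterval × X, ∃ (r : ℝ) (U : Set X), 0 < r ∧ IsOpen U ∧ z.2 ∈ U ∧
      ∀ w : unitInterval × X, dist w.1 z.1 < r → w.2 ∈ U → D (K w) (K z) < 8⁻¹ := by
    intro z
    have hopen : IsOpen (K ⁻¹' {q : RPn n | D q (K z) < 8⁻¹}) :=
      (isOpen_Dball (K z) _).preimage K.continuous
    have hzmem : z ∈ K ⁻¹' {q : RPn n | D q (K z) < 8⁻¹} := by
      show D (K z) (K z) < 8⁻¹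
      rw [D_self]; norm_num
    obtain ⟨u, v, hu, hzu, hvo, hzv, huv⟩ :=
      mem_nhds_prod_iff'.mp (hopen.mem_nhds hzmem)
    obtain ⟨r, hr, hball⟩ := Metric.isOpen_iff.mp hu z.1 hzu
    refine ⟨r, v, hr, hvo, hzv, ?_⟩
    intro w hw1 hw2
    exact huv (Set.mk_mem_prod (hball hw1) hw2)
  choose r U hr hUo hzU hkey using hpt
  have hcov : (Set.univ : Set (unitInterval × X)) ⊆
      ⋃ z : unitInterval × X, (Metric.ball z.1 (r z / 2)) ×ˢ U z := by
    intro z _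
    exact Set.mem_iUnion.mpr ⟨z, Set.mk_mem_prod (Metric.mem_ball_self (by linarith [hr z])) (hzU z)⟩
  obtain ⟨s, hs⟩ := isCompact_univ.elim_finite_subcover
    (fun z : unitInterval × X => (Metric.ball z.1 (r z / 2)) ×ˢ U z)
    (fun z => Metric.isOpen_ball.prod (hUo z)) hcov
  have hsne : s.Nonempty := by
    obtain ⟨z₀⟩ := (inferInstance : Nonempty (unitInterval × X))
    obtain ⟨w, hws, _⟩ := Set.mem_iUnion₂.mp (hs (Set.mem_univ z₀))
    exact ⟨w, hws⟩
  refine ⟨s.inf' hsne (fun z => r z / 2), ?_, ?_⟩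
  · rw [Finset.lt_inf'_iff]
    intro z _
    linarith [hr z]
  · intro x t t' hd
    obtain ⟨w, hws, hmem⟩ := Set.mem_iUnion₂.mp (hs (Set.mem_univ (t, x)))
    obtain ⟨ht1, hx1⟩ := hmem
    have hδle : s.inf' hsne (fun z => r z / 2) ≤ r w / 2 := Finset.inf'_le _ hws
    have hd1 : D (K (t, x)) (K w) < 8⁻¹ := by
      apply hkey w (t, x) _ hx1
      calc dist t w.1 < r w / 2 := ht1
        _ < r w := by linarith [hr w]
    have hd2 : D (K (t', x)) (K w) < 8⁻¹ := by
      apply hkey w (t', x) _ hx1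
      calc dist t' w.1 ≤ dist t' t + dist t w.1 := dist_triangle _ _ _
        _ < s.inf' hsne (fun z => r z / 2) + r w / 2 := by
            rw [dist_comm] at hd; exact add_lt_add_of_lt_of_le hd (le_of_lt ht1)
        _ ≤ r w / 2 + r w / 2 := by linarith
        _ = r w := by ring
    calc D (K (t, x)) (K (t', x)) ≤ D (K (t, x)) (K w) + D (K w) (K (t', x)) := D_triangle _ _ _
      _ = D (K (t, x)) (K w) + D (K (t', x)) (K w) := by rw [D_symm (K w)]
      _ < 8⁻¹ + 8⁻¹ := add_lt_add hd1 hd2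
      _ = 4⁻¹ := by norm_num



end Part2

section Main
open StrongSurj unitInterval

/-- let `X` be a finite connected `n`-dimensional CW complex with
`Hⁿ(X; ℤ) ≠ 0`; then there is a map `X → ℝPⁿ` whose entire homotopy class consists of
surjective maps (a strong surjection).  The complex `X` is formalized as a compact
connected space together with Hopf–Whitney data: an abelian group `Hn` (playing the role
of `Hⁿ(X; ℤ)`) and an invariant `Φ` inducing a bijection between homotopy classes of
maps `X → Sⁿ` and `Hn`, sending constant maps to `0`; the hypothesis `Hⁿ(X; ℤ) ≠ 0` is
`Nontrivial Hn`. -/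
theorem strong_surjection_onto_RPn (n : ℕ) (X : Type) [TopologicalSpace X]
    [ConnectedSpace X] [CompactSpace X]
    (Hn : Type) [AddCommGroup Hn] [Nontrivial Hn]
    (Φ : C(X, Sph n) → Hn)
    (hinv : ∀ f g : C(X, Sph n), f.Homotopic g → Φ f = Φ g)
    (hclass : ∀ f g : C(X, Sph n), Φ f = Φ g → f.Homotopic g)
    (hsurj : Function.Surjective Φ)
    (hconst : ∀ y : Sph n, Φ (ContinuousMap.const X y) = 0) :
    ∃ f : C(X, RPn n), ∀ g : C(X, RPn n), f.Homotopic g → Function.Surjective g := by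
  obtain ⟨c, hc⟩ := exists_ne (0 : Hn)
  obtain ⟨f, hf⟩ := hsurj c
  set prmap : C(Sph n, RPn n) := ⟨pr n, pr_continuous⟩ with hprmap
  refine ⟨prmap.comp f, ?_⟩
  intro g hg
  obtain ⟨K⟩ := hg
  obtain ⟨δ, hδ, hK⟩ := uniform_time (n := n) (X := X) K.toContinuousMap
  obtain ⟨m, hm⟩ := exists_nat_one_div_lt hδ
  set N : ℕ := m + 1 with hN
  have hN0 : (0 : ℝ) < (N : ℝ) := by positivity
  have hNδ : 1 / (N : ℝ) < δ := by
    rw [hN]; push_cast; exact hm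
  -- Lipschitz bound for `min · 1`
  have hlip : ∀ a b : ℝ, |min a 1 - min b 1| ≤ |a - b| := by
    intro a b
    rcases le_total a 1 with h1 | h1 <;> rcases le_total b 1 with h2 | h2
    · rw [min_eq_left h1, min_eq_left h2]
    · rw [min_eq_left h1, min_eq_right h2,
        abs_of_nonpos (by linarith), abs_of_nonpos (by linarith)]
      linarith
    · rw [min_eq_right h1, min_eq_left h2,
        abs_of_nonneg (by linarith), abs_of_nonneg (by linarith)]
      linarith
    · rw [min_eq_right h1, min_eq_right h2, sub_self, abs_zero]
      exact abs_nonneg _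
  -- the subdivision times
  have htkmem : ∀ k : ℕ, min ((k : ℝ) / N) 1 ∈ Set.Icc (0:ℝ) 1 := by
    intro k
    constructor
    · exact le_min (by positivity) zero_le_one
    · exact min_le_right _ _
  set tk : ℕ → unitInterval := fun k => ⟨min ((k : ℝ) / N) 1, htkmem k⟩ with htk
  have htk0 : tk 0 = 0 := by
    apply Subtype.ext
    show min (((0 : ℕ) : ℝ) / N) 1 = 0
    norm_num
  have htkN : tk N = 1 := by
    apply Subtype.ext
    show min (((N : ℕ) : ℝ) / N) 1 = ((1 : unitInterval) : ℝ)
    rw [div_self (ne_of_gt hN0), min_self]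
    simp
  -- inductive lifting
  have key : ∀ k : ℕ, ∃ h : C(X, Sph n), f.Homotopic h ∧
      ∀ x, pr n (h x) = K (tk k, x) := by
    intro k
    induction k with
    | zero =>
      refine ⟨f, ContinuousMap.Homotopic.refl f, fun x => ?_⟩
      rw [htk0, K.apply_zero]
      rfl
    | succ k ih =>
      obtain ⟨h, hfh, hph⟩ := ih
      -- the partial time reparametrization
      have hτmem : ∀ t : unitInterval, min (((k : ℝ) + t) / N) 1 ∈ Set.Icc (0:ℝ) 1 := by
        intro t
        constructor
        · exact le_min (div_nonneg (add_nonneg (Nat.cast_nonneg k) t.2.1) hN0.le) zero_le_one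
        · exact min_le_right _ _
      set τ : unitInterval → unitInterval := fun t => ⟨min (((k : ℝ) + t) / N) 1, hτmem t⟩
        with hτ
      have hτcont : Continuous τ := by
        apply Continuous.subtype_mk
        exact ((continuous_const.add continuous_subtype_val).div_const _).min continuous_const
      have hτ0 : τ 0 = tk k := by
        apply Subtype.ext
        show min (((k : ℝ) + ((0 : unitInterval) : ℝ)) / N) 1 = min (((k:ℕ) : ℝ) / N) 1
        norm_num
      have hτ1 : τ 1 = tk (k + 1) := by
        apply Subtype.ext
        show min (((k : ℝ) + ((1 : unitInterval) : ℝ)) / N) 1 = min (((k+1 : ℕ) : ℝ) / N) 1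
        push_cast
        norm_num
      have hτdist : ∀ t : unitInterval, dist (τ t) (tk k) < δ := by
        intro t
        rw [Subtype.dist_eq, Real.dist_eq]
        calc |min (((k : ℝ) + t) / N) 1 - min ((k : ℝ) / N) 1| ≤
            |((k : ℝ) + t) / N - (k : ℝ) / N| := hlip _ _
          _ = |(t : ℝ) / N| := by rw [← sub_div, add_sub_cancel_left]
          _ = (t : ℝ) / N := abs_of_nonneg (div_nonneg t.2.1 hN0.le)
          _ ≤ 1 / N := by gcongr; exact t.2.2
          _ < δ := hNδ
      have hDτ : ∀ (t : unitInterval) (x : X), D (K (τ t, x)) (pr n (h x)) < 4⁻¹ := by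
        intro t x
        rw [hph x, D_symm]
        exact hK x (tk k) (τ t) (by rw [dist_comm]; exact hτdist t)
      -- next lift
      have hcont' : Continuous fun x => Sec (h x) (K (tk (k+1), x)) := by
        apply continuous_sec_comp h.continuous
        · exact K.continuous.comp (continuous_const.prodMk continuous_id)
        · intro x
          have := hDτ 1 x
          rwa [hτ1] at this
      set h' : C(X, Sph n) := ⟨fun x => Sec (h x) (K (tk (k+1), x)), hcont'⟩ with hh'
      have hhom : ContinuousMap.Homotopy h h' :=
        { toFun := fun z => Sec (h z.2) (K (τ z.1, z.2))
          continuous_toFun := by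
            apply continuous_sec_comp (h.continuous.comp continuous_snd)
            · exact K.continuous.comp ((hτcont.comp continuous_fst).prodMk continuous_snd)
            · exact fun z => hDτ z.1 z.2
          map_zero_left := by
            intro x
            show Sec (h x) (K (τ 0, x)) = h x
            rw [hτ0]
            exact Sec_eq (hph x) (by rw [dist_self]; norm_num)
          map_one_left := by
            intro x
            show Sec (h x) (K (τ 1, x)) = h' x
            rw [hτ1]
            rfl }
      refine ⟨h', hfh.trans ⟨hhom⟩, fun x => ?_⟩
      apply Sec_pr
      have := hDτ 1 x
      rw [hτ1] at this
      rw [hph x] at this ⊢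
      calc D (K (tk (k+1), x)) (K (tk k, x)) < 4⁻¹ := this
        _ < 1 := by norm_num
  obtain ⟨h, hfh, hph⟩ := key N
  have hgh : ∀ x, pr n (h x) = g x := by
    intro x
    rw [hph x, htkN, K.apply_one]
  intro q
  by_contra hno
  push_neg at hno
  obtain ⟨y, hy⟩ := pr_surjective q
  have hmiss : ∀ x, h x ≠ y := by
    intro x hxy
    exact hno x (by rw [← hgh x, hxy, hy])
  have h0 : Φ h = 0 := by
    rw [hinv h (ContinuousMap.const X (-y)) (homotopic_const_of_misses h y hmiss)]
    exact hconst (-y)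
  have hΦh : Φ h = c := by rw [← hf]; exact (hinv f h hfh).symm
  exact hc (hΦh ▸ h0)


end Main
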